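/- Morita's p-adic gamma function satisfies: for x ∈ ℤ_p, Γ_p(x)·Γ_p(1-x) = -(-1)^t where t ∈ {0,1,…,p-1} and t ≡ -x (mod p). -/

import Mathlib

open Finset

section aux
variable {p : ℕ} [hp : Fact p.Prime]

private lemma nat_norm_lt_one (n : ℕ) : ‖(n : ℤ_[p])‖ < 1 ↔ p ∣ n := by
  have h1 : ((n : ℤ_[p]) : ℚ_[p]) = ((n : ℤ) : ℚ_[p]) := by push_cast; ring
  rw [← PadicInt.padic_norm_e_of_padicInt, h1, Padic.norm_intCast_lt_one_iff,
    Int.natCast_dvd_natCast]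

private lemma clopen_ball : IsClopen {x : ℤ_[p] | ‖x‖ < 1} := by
  have hset : {x : ℤ_[p] | ‖x‖ < 1} = (fun x : ℤ_[p] => ‖x‖) ⁻¹' (Set.Iic ((p:ℝ) ^ (-1 : ℤ))) := by
    ext x
    simp only [Set.mem_setOf_eq, Set.mem_preimage, Set.mem_Iic]
    have := PadicInt.norm_lt_pow_iff_norm_le_pow_sub_one x 0
    simpa using this
  constructor
  · rw [hset]
    exact (isClosed_Iic).preimage continuous_norm
  · exact isOpen_lt continuous_norm continuous_const

/-- The step factor. -/
private noncomputable def cfun (p : ℕ) [Fact p.Prime] (x : ℤ_[p]) : ℤ_[p] :=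
  if ‖x‖ < 1 then -1 else -x

private lemma cfun_cont : Continuous (cfun p) := by
  unfold cfun
  apply Continuous.if _ continuous_const continuous_neg
  intro a ha
  rw [clopen_ball.frontier_eq] at ha
  exact absurd ha (Set.notMem_empty a)

/-- Step recurrence for Γp, first at naturals then everywhere by density. -/
private lemma gamma_step (Γp : ℤ_[p] → ℤ_[p]) (hcont : Continuous Γp)
    (hval : ∀ n : ℕ, Γp (n : ℤ_[p]) =
      (-1) ^ n * ∏ j ∈ (Finset.Ico 1 n).filter (fun j => ¬ (p ∣ j)), (j : ℤ_[p])) :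
    ∀ x : ℤ_[p], Γp (x + 1) = cfun p x * Γp x := by
  have hnat : ∀ n : ℕ, Γp ((n : ℤ_[p]) + 1) = cfun p (n : ℤ_[p]) * Γp (n : ℤ_[p]) := by
    intro n
    have hc : ((n : ℤ_[p]) + 1) = ((n + 1 : ℕ) : ℤ_[p]) := by push_cast; ring
    rw [hc, hval, hval]
    have hcf : cfun p (n : ℤ_[p]) = if p ∣ n then -1 else -(n : ℤ_[p]) := by
      unfold cfun
      by_cases h : p ∣ n
      · rw [if_pos ((nat_norm_lt_one n).2 h), if_pos h]
      · rw [if_neg (fun hh => h ((nat_norm_lt_one n).1 hh)), if_neg h]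
    rcases Nat.eq_zero_or_pos n with rfl | hn
    · simp [cfun]
    · have hprod : ∏ j ∈ (Finset.Ico 1 (n+1)).filter (fun j => ¬ (p ∣ j)), (j : ℤ_[p])
          = (∏ j ∈ (Finset.Ico 1 n).filter (fun j => ¬ (p ∣ j)), (j : ℤ_[p]))
            * (if p ∣ n then 1 else (n : ℤ_[p])) := by
        rw [Finset.prod_filter, Finset.prod_filter, Finset.prod_Ico_succ_top hn]
        by_cases h : p ∣ n
        · simp [h]
        · simp [h]
      rw [hprod, hcf]
      by_cases h : p ∣ n <;> simp [h, pow_succ] <;> ring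
  have := PadicInt.denseRange_natCast.equalizer
    (hcont.comp (continuous_id.add continuous_const))
    ((cfun_cont).mul hcont)
    (funext hnat)
  intro x
  exact congrFun this x

end aux

/-- Morita's `p`-adic gamma function (the continuous extension of
`n ↦ (-1)^n ∏_{0<j<n, p∤j} j`) satisfies the reflection formula
`Γ_p(x)·Γ_p(1-x) = -(-1)^t` where `t ∈ {0,…,p-1}` and `t ≡ -x (mod p)`. -/
theorem moritaGamma_reflection (p : ℕ) [Fact p.Prime] (hodd : Odd p)
    (Γp : ℤ_[p] → ℤ_[p]) (hcont : Continuous Γp)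
    (hval : ∀ n : ℕ, Γp (n : ℤ_[p]) =
      (-1) ^ n * ∏ j ∈ (Finset.Ico 1 n).filter (fun j => ¬ (p ∣ j)), (j : ℤ_[p]))
    (x : ℤ_[p]) (t : ℕ) (ht : t < p) (htx : ∃ z : ℤ_[p], x + (t : ℤ_[p]) = p * z) :
    Γp x * Γp (1 - x) = -(-1 : ℤ_[p]) ^ t := by
  have hp := (Fact.out : p.Prime)
  set f : ℤ_[p] → ℤ_[p] := fun y => Γp y * Γp (1 - y) with hf
  have hfc : Continuous f := hcont.mul (hcont.comp (continuous_const.sub continuous_id))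
  have hstep := gamma_step Γp hcont hval
  -- functional equation for f
  have hkey : ∀ y : ℤ_[p], f (y + 1) = cfun p y * (Γp y * Γp (-y)) ∧
      f y = cfun p (-y) * (Γp y * Γp (-y)) := by
    intro y
    constructor
    · have h1 : (1 : ℤ_[p]) - (y + 1) = -y := by ring
      simp only [hf, h1, hstep y]; ring
    · have h1 : (1 : ℤ_[p]) - y = -y + 1 := by ring
      simp only [hf, h1, hstep (-y)]; ring
  have hstep0 : ∀ y : ℤ_[p], ‖y‖ < 1 → f (y + 1) = f y := by
    intro y hy
    have hy' : ‖(-y)‖ < 1 := by rwa [norm_neg]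
    rw [(hkey y).1, (hkey y).2, cfun, cfun, if_pos hy, if_pos hy']
  have hstep1 : ∀ y : ℤ_[p], ¬ ‖y‖ < 1 → f (y + 1) = - f y := by
    intro y hy
    have hy' : ¬ ‖(-y)‖ < 1 := by rwa [norm_neg]
    rw [(hkey y).1, (hkey y).2, cfun, cfun, if_neg hy, if_neg hy']
    ring
  -- iterate
  have hiter : ∀ (k : ℕ) (y : ℤ_[p]), (∀ j < k, ¬ ‖y + (j : ℤ_[p])‖ < 1) →
      f (y + (k : ℤ_[p])) = (-1) ^ k * f y := by
    intro k
    induction k with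
    | zero => intro y _; simp
    | succ k ih =>
      intro y hy
      have h1 : y + ((k+1 : ℕ) : ℤ_[p]) = (y + (k : ℤ_[p])) + 1 := by push_cast; ring
      rw [h1, hstep1 _ (hy k (Nat.lt_succ_self k)), ih y (fun j hj => hy j (hj.trans (Nat.lt_succ_self k)))]
      ring
  -- value on p ℤ_p
  have hnormp : ∀ z : ℤ_[p], ‖(p : ℤ_[p]) * z‖ < 1 := by
    intro z
    calc ‖(p : ℤ_[p]) * z‖ ≤ ‖(p : ℤ_[p])‖ * 1 := by
          rw [norm_mul]; exact mul_le_mul_of_nonneg_left (PadicInt.norm_le_one z) (norm_nonneg _)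
      _ = (p : ℝ)⁻¹ := by rw [PadicInt.norm_p, mul_one]
      _ < 1 := by
          rw [inv_lt_one_iff₀]
          right; exact_mod_cast hp.one_lt
  have hA : ∀ y : ℤ_[p], ‖y‖ < 1 → f y = -1 := by
    have hnatA : ∀ m : ℕ, f ((p * m : ℕ) : ℤ_[p]) = -1 := by
      intro m
      induction m with
      | zero =>
        have h0 : Γp 0 = 1 := by simpa using hval 0
        have h1 : Γp 1 = -1 := by
          have := hval 1
          simpa using this
        simp [hf, h0, h1]
      | succ m ih =>
        have hdvd : ∀ j < p - 1, ¬ ‖((p*m+1 : ℕ) : ℤ_[p]) + (j : ℤ_[p])‖ < 1 := by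
          intro j hj
          have hc : ((p*m+1 : ℕ) : ℤ_[p]) + (j : ℤ_[p]) = ((p*m+1+j : ℕ) : ℤ_[p]) := by
            push_cast; ring
          rw [hc, nat_norm_lt_one]
          intro hdd
          have hdd' : p ∣ p*m + (1+j) := by rwa [Nat.add_assoc] at hdd
          have h1j : p ∣ 1 + j := (Nat.dvd_add_right ⟨m, rfl⟩).1 hdd'
          have := Nat.le_of_dvd (by omega) h1j
          have := hp.two_le
          omega
        have hstart : f ((p*m : ℕ) : ℤ_[p]) = f ((p*m+1 : ℕ) : ℤ_[p]) := by
          have hlt : ‖((p*m : ℕ) : ℤ_[p])‖ < 1 := by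
            rw [nat_norm_lt_one]; exact ⟨m, rfl⟩
          have := hstep0 _ hlt
          rw [← this]
          norm_num [Nat.cast_add]
        have hiter' := hiter (p-1) ((p*m+1 : ℕ) : ℤ_[p]) hdvd
        have hc2 : ((p*m+1 : ℕ) : ℤ_[p]) + ((p-1 : ℕ) : ℤ_[p]) = ((p*(m+1) : ℕ) : ℤ_[p]) := by
          have h2le := hp.two_le
          have : p*m+1+(p-1) = p*(m+1) := by rw [Nat.mul_succ]; omega
          rw [← Nat.cast_add, this]
        rw [hc2] at hiter'
        have heven : (-1 : ℤ_[p]) ^ (p - 1) = 1 := by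
          apply Even.neg_one_pow
          rcases hodd with ⟨r, hr⟩
          exact ⟨r, by omega⟩
        rw [hiter', heven, one_mul, ← hstart, ih]
    intro y hy
    obtain ⟨z, hz⟩ := (PadicInt.norm_lt_one_iff_dvd y).1 hy
    have hg : (fun w : ℤ_[p] => f ((p : ℤ_[p]) * w)) = (fun _ : ℤ_[p] => (-1 : ℤ_[p])) := by
      apply PadicInt.denseRange_natCast.equalizer
        (hfc.comp (continuous_const.mul continuous_id)) continuous_const
      funext m
      have : (p : ℤ_[p]) * (m : ℤ_[p]) = ((p * m : ℕ) : ℤ_[p]) := by push_cast; ring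
      simp only [Function.comp_apply, Pi.mul_apply, id_eq, this, hnatA m]
    rw [hz]
    exact congrFun hg z
  -- main computation
  obtain ⟨z, hz⟩ := htx
  have hxj : ∀ j < t, ¬ ‖x + (j : ℤ_[p])‖ < 1 := by
    intro j hj
    have hx : x + (j : ℤ_[p]) = (p : ℤ_[p]) * z - ((t - j : ℕ) : ℤ_[p]) := by
      rw [Nat.cast_sub hj.le]
      rw [← hz]; ring
    rw [PadicInt.norm_lt_one_iff_dvd, hx]
    intro hdd
    have h1 : (p : ℤ_[p]) ∣ ((t - j : ℕ) : ℤ_[p]) := by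
      have := dvd_sub (Dvd.intro z rfl) hdd
      simpa using this
    rw [← PadicInt.norm_lt_one_iff_dvd, nat_norm_lt_one] at h1
    have : p ≤ t - j := Nat.le_of_dvd (by omega) h1
    omega
  have hft := hiter t x hxj
  have hxt : ‖x + (t : ℤ_[p])‖ < 1 := by rw [hz]; exact hnormp z
  rw [hA _ hxt] at hft
  have h2 : ((-1 : ℤ_[p]) ^ t) * ((-1 : ℤ_[p]) ^ t) = 1 := by
    rw [← pow_add]
    exact Even.neg_one_pow ⟨t, by ring⟩
  calc f x = (((-1 : ℤ_[p]) ^ t) * ((-1) ^ t)) * f x := by rw [h2, one_mul]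
    _ = (-1) ^ t * ((-1) ^ t * f x) := by ring
    _ = (-1) ^ t * (-1) := by rw [← hft]
    _ = -(-1 : ℤ_[p]) ^ t := by ring
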